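/- Let X ⊆ ∏_{ξ<ω₁} K_ξ be a closed subspace of a product of compact metrizable spaces, F ⊆ X compact. Then there exists α < ω₁ such that F = X ∩ π_α⁻¹(π_α(F)), where π_α is the projection onto the first α coordinates. -/

import Mathlib

open Set

/-- The first uncountable ordinal. -/
noncomputable def omega1 : Ordinal := (Cardinal.aleph 1).ord

/-- Projection onto the first `α` coordinates of a product indexed by `{ξ // ξ < β}`. -/
def projTo (K : Ordinal → Type*) {α β : Ordinal} (h : α ≤ β)
    (x : ∀ ξ : {ξ : Ordinal // ξ < β}, K ξ) : ∀ ξ : {ξ : Ordinal // ξ < α}, K ξ :=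
  fun ξ => x ⟨ξ.1, lt_of_lt_of_le ξ.2 h⟩

/-- Every closed subset of a hereditarily Lindelöf closed subspace of an
`ω₁`-indexed product of compact metrizable spaces depends on countably many
coordinates. -/
theorem stmt16 (K : Ordinal → Type) [∀ ξ, TopologicalSpace (K ξ)]
    [∀ ξ, CompactSpace (K ξ)] [∀ ξ, TopologicalSpace.MetrizableSpace (K ξ)]
    (X : Set (∀ ξ : {ξ : Ordinal // ξ < omega1}, K ξ)) (hX : IsClosed X)
    (hHL : HereditarilyLindelofSpace X)
    (F : Set (∀ ξ : {ξ : Ordinal // ξ < omega1}, K ξ))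
    (hFX : F ⊆ X) (hF : IsCompact F) :
    ∃ α : Ordinal, α < omega1 ∧ ∀ h : α ≤ omega1,
      F = X ∩ (projTo K h) ⁻¹' (projTo K h '' F) := by
  classical
  have hFc : IsClosed F := hF.isClosed
  have hFco : IsOpen Fᶜ := hFc.isOpen_compl
  -- for each point outside F choose a basic open cylinder
  have key : ∀ x : ↥(Fᶜ), ∃ (I : Finset {ξ : Ordinal // ξ < omega1})
      (u : ∀ ξ : {ξ : Ordinal // ξ < omega1}, Set (K ξ)),
      (∀ a ∈ I, IsOpen (u a) ∧ x.1 a ∈ u a) ∧ (↑I : Set _).pi u ⊆ Fᶜ := by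
    intro x
    exact isOpen_pi_iff.mp hFco x.1 x.2
  choose I u hu hsub using key
  set V : ↥(Fᶜ) → Set (∀ ξ : {ξ : Ordinal // ξ < omega1}, K ξ) :=
    fun x => (↑(I x) : Set _).pi (u x) with hV
  have hVopen : ∀ x, IsOpen (V x) :=
    fun x => isOpen_set_pi (I x).finite_toSet (fun a ha => (hu x a ha).1)
  have hmemV : ∀ x : ↥(Fᶜ), x.1 ∈ V x :=
    fun x => fun a ha => (hu x a ha).2
  -- X \ F is Lindelöf
  have hLin : IsLindelof (X \ F) := by
    have h1 : IsLindelof (Subtype.val ⁻¹' (X \ F) : Set ↥X) :=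
      HereditarilyLindelof_LindelofSets _
    have h2 := h1.image continuous_subtype_val
    have : (Subtype.val '' (Subtype.val ⁻¹' (X \ F) : Set ↥X)) = X \ F := by
      rw [Subtype.image_preimage_coe]
      exact inter_eq_self_of_subset_right diff_subset
    rwa [this] at h2
  have hcover : X \ F ⊆ ⋃ x : ↥(Fᶜ), V x := by
    intro y hy
    exact mem_iUnion.mpr ⟨⟨y, hy.2⟩, hmemV ⟨y, hy.2⟩⟩
  obtain ⟨t, htc, htcov⟩ := hLin.elim_countable_subcover V hVopen hcover
  -- the countable set of coordinates used
  set T : Set {ξ : Ordinal // ξ < omega1} := ⋃ x ∈ t, (↑(I x) : Set _) with hT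
  have hTc : T.Countable := htc.biUnion (fun x _ => (I x).countable_toSet)
  -- define α
  have hTctble : Countable ↥T := hTc.to_subtype
  have hTsmall : Small.{0} ↥T := Countable.toSmall ↥T
  set g : Shrink ↥T → Ordinal :=
    fun i => ((equivShrink ↥T).symm i).1.1 + 1 with hg
  set α : Ordinal := ⨆ i, g i with hα
  have hlim : Order.IsSuccLimit omega1 := Cardinal.isSuccLimit_ord (Cardinal.aleph0_le_aleph 1)
  have hαlt : α < omega1 := by
    apply Ordinal.iSup_lt_ord_lift
    · have hcof : omega1.cof = Cardinal.aleph 1 := Cardinal.isRegular_aleph_one.cof_eq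
      rw [hcof]
      have hc : Countable (Shrink ↥T) := Countable.of_equiv _ (equivShrink ↥T)
      have h1 := Cardinal.lift_le.mpr (Cardinal.mk_le_aleph0_iff.mpr hc)
      rw [Cardinal.lift_aleph0] at h1
      exact h1.trans_lt Cardinal.aleph0_lt_aleph_one
    · intro i
      simpa [hg, Order.succ_eq_add_one] using hlim.succ_lt ((equivShrink ↥T).symm i).1.2
  have hcoordlt : ∀ ξ ∈ T, ξ.1 < α := by
    intro ξ hξ
    have h1 : ξ.1 < g (equivShrink ↥T ⟨ξ, hξ⟩) := by
      rw [hg]; simp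
    exact h1.trans_le (Ordinal.le_iSup g _)
  refine ⟨α, hαlt, fun h => ?_⟩
  apply Subset.antisymm
  · intro y hy
    exact ⟨hFX hy, ⟨y, hy, rfl⟩⟩
  · rintro y ⟨hyX, f, hfF, hproj⟩
    by_contra hyF
    have hyXF : y ∈ X \ F := ⟨hyX, hyF⟩
    obtain ⟨x, hxt, hyV⟩ := mem_iUnion₂.mp (htcov hyXF)
    -- f agrees with y on coordinates below α, in particular on I x
    have hfV : f ∈ V x := by
      intro a ha
      have haT : a ∈ T := mem_biUnion hxt ha
      have halt : a.1 < α := hcoordlt a haT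
      have := congrFun hproj ⟨a.1, halt⟩
      -- this : f ⟨a.1, _⟩ = y ⟨a.1, _⟩  (definitionaly f a = y a)
      have hfy : f a = y a := this
      rw [hfy]
      exact hyV a ha
    exact (hsub x hfV) hfF
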